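/- For a P-extendable i-centered incomplete game (N,K,v) and any x ∈ {0,1}^{K^c}, the game v_x defined via its Möbius transform by m^{v_x}(∅)=0, m^{v_x}({i})=v({i}), and for S ∈ K^c: m^{v_x}(S) = m^v(S∪{i}) and m^{v_x}(S∪{i})=0 if x_S=0, while m^{v_x}(S)=0 and m^{v_x}(S∪{i})=m^v(S∪{i}) if x_S=1, is a positive extension of (N,K,v). -/

import Mathlib

open Finset

/-- Möbius transform of a (complete) cooperative game `w : 2^N → ℝ`. -/
noncomputable def mobius {α : Type*} [DecidableEq α] (w : Finset α → ℝ) (T : Finset α) : ℝ :=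
  ∑ S ∈ T.powerset, (-1 : ℝ) ^ (T.card - S.card) * w S

/-- Möbius transform of an `i`-centered incomplete game `v`, defined for `S ∈ K`,
where `K = {S : i ∈ S} ∪ {∅}`: `m^v(S) = Σ_{T ⊆ S, T ∈ K} (-1)^{|S \ T|} v(T)`. -/
noncomputable def mobiusK {α : Type*} [DecidableEq α] (i : α) (v : Finset α → ℝ)
    (S : Finset α) : ℝ :=
  ∑ T ∈ S.powerset.filter (fun T => i ∈ T ∨ T = ∅), (-1 : ℝ) ^ ((S \ T).card) * v T

/-- The prescribed Möbius transform of the game `v_x`, for `x : K^c → {0,1}`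
(encoded as a Boolean function on coalitions). -/
noncomputable def mvx {α : Type*} [DecidableEq α] (i : α) (v : Finset α → ℝ)
    (x : Finset α → Bool) (T : Finset α) : ℝ :=
  if T = ∅ then 0
  else if T = {i} then v {i}
  else if i ∉ T then (if x T = false then mobiusK i v (insert i T) else 0)
  else (if x (T.erase i) = true then mobiusK i v T else 0)

section Aux

variable {α : Type*} [DecidableEq α]

lemma neg_one_pow_sub' {a r : ℕ} (h : r ≤ a) : (-1 : ℝ) ^ (a - r) = (-1) ^ a * (-1) ^ r := by
  have h1 : ((-1 : ℝ)) ^ r * (-1) ^ r = 1 := by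
    rw [← pow_add]
    exact Even.neg_one_pow ⟨r, by ring⟩
  calc (-1 : ℝ) ^ (a - r) = (-1) ^ (a - r) * ((-1) ^ r * (-1) ^ r) := by rw [h1, mul_one]
    _ = ((-1) ^ (a - r) * (-1) ^ r) * (-1) ^ r := by ring
    _ = (-1) ^ a * (-1) ^ r := by rw [← pow_add, Nat.sub_add_cancel h]

lemma sum_sign_powerset (A : Finset α) :
    ∑ R ∈ A.powerset, (-1 : ℝ) ^ (A.card - R.card) = if A = ∅ then 1 else 0 := by
  have key : ∑ R ∈ A.powerset, (-1 : ℝ) ^ R.card = if A = ∅ then 1 else 0 := by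
    have := Finset.sum_powerset_neg_one_pow_card (x := A)
    have : ((∑ m ∈ A.powerset, (-1 : ℤ) ^ m.card : ℤ) : ℝ) =
        ((if A = ∅ then 1 else 0 : ℤ) : ℝ) := by rw [this]
    push_cast at this
    simpa using this
  have : ∀ R ∈ A.powerset, (-1 : ℝ) ^ (A.card - R.card) = (-1) ^ A.card * (-1) ^ R.card := by
    intro R hR
    exact neg_one_pow_sub' (Finset.card_le_card (Finset.mem_powerset.mp hR))
  rw [Finset.sum_congr rfl this, ← Finset.mul_sum, key]
  by_cases hA : A = ∅ <;> simp [hA]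

lemma interval_reindex (U T : Finset α) (hUT : U ⊆ T) (F : Finset α → ℝ) :
    ∑ S ∈ T.powerset.filter (fun S => U ⊆ S), F S = ∑ R ∈ (T \ U).powerset, F (U ∪ R) := by
  apply Finset.sum_nbij' (fun S => S \ U) (fun R => U ∪ R)
  · intro S hS
    simp only [Finset.mem_filter, Finset.mem_powerset] at hS ⊢
    exact Finset.sdiff_subset_sdiff hS.1 (le_refl U)
  · intro R hR
    simp only [Finset.mem_filter, Finset.mem_powerset] at hR ⊢
    exact ⟨Finset.union_subset hUT (hR.trans Finset.sdiff_subset),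
      Finset.subset_union_left⟩
  · intro S hS
    simp only [Finset.mem_filter, Finset.mem_powerset] at hS
    exact Finset.union_sdiff_of_subset hS.2
  · intro R hR
    simp only [Finset.mem_powerset] at hR
    have hdisj : Disjoint U R := by
      refine Finset.disjoint_left.mpr fun a haU haR => ?_
      exact (Finset.mem_sdiff.mp (hR haR)).2 haU
    exact Finset.union_sdiff_cancel_left hdisj
  · intro S hS
    simp only [Finset.mem_filter, Finset.mem_powerset] at hS
    rw [Finset.union_sdiff_of_subset hS.2]

lemma interval_mem_card (U T R : Finset α) (hUT : U ⊆ T) (hR : R ⊆ T \ U) :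
    (U ∪ R).card = U.card + R.card ∧ T.card = U.card + (T \ U).card ∧ R.card ≤ (T \ U).card := by
  have hdisj : Disjoint U R := by
    refine Finset.disjoint_left.mpr fun a haU haR => ?_
    exact (Finset.mem_sdiff.mp (hR haR)).2 haU
  refine ⟨Finset.card_union_of_disjoint hdisj, ?_, Finset.card_le_card hR⟩
  have hle := Finset.card_le_card hUT
  rw [Finset.card_sdiff_of_subset hUT]
  omega

lemma sign1 (U T : Finset α) (h : U ⊆ T) :
    ∑ S ∈ T.powerset.filter (fun S => U ⊆ S), (-1 : ℝ) ^ (T.card - S.card) =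
      if U = T then 1 else 0 := by
  rw [interval_reindex U T h]
  have congr1 : ∀ R ∈ (T \ U).powerset, (-1 : ℝ) ^ (T.card - (U ∪ R).card) =
      (-1) ^ ((T \ U).card - R.card) := by
    intro R hR
    obtain ⟨h1, h2, h3⟩ := interval_mem_card U T R h (Finset.mem_powerset.mp hR)
    congr 1
    omega
  rw [Finset.sum_congr rfl congr1, sum_sign_powerset]
  congr 1
  simp only [eq_iff_iff, Finset.sdiff_eq_empty_iff_subset]
  exact ⟨fun h' => le_antisymm h h', fun h' => h' ▸ le_refl T⟩

lemma sign2 (U T : Finset α) (h : U ⊆ T) :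
    ∑ S ∈ T.powerset.filter (fun S => U ⊆ S), (-1 : ℝ) ^ (S.card - U.card) =
      if U = T then 1 else 0 := by
  rw [interval_reindex U T h]
  have congr1 : ∀ R ∈ (T \ U).powerset, (-1 : ℝ) ^ ((U ∪ R).card - U.card) =
      (-1) ^ R.card := by
    intro R hR
    obtain ⟨h1, _, _⟩ := interval_mem_card U T R h (Finset.mem_powerset.mp hR)
    congr 1
    omega
  rw [Finset.sum_congr rfl congr1]
  have key : ∑ R ∈ (T \ U).powerset, (-1 : ℝ) ^ R.card = if T \ U = ∅ then 1 else 0 := by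
    have := Finset.sum_powerset_neg_one_pow_card (x := T \ U)
    have : ((∑ m ∈ (T \ U).powerset, (-1 : ℤ) ^ m.card : ℤ) : ℝ) =
        ((if T \ U = ∅ then 1 else 0 : ℤ) : ℝ) := by rw [this]
    push_cast at this
    simpa using this
  rw [key]
  congr 1
  simp only [eq_iff_iff, Finset.sdiff_eq_empty_iff_subset]
  exact ⟨fun h' => le_antisymm h h', fun h' => h' ▸ le_refl T⟩

lemma swap_sum (T : Finset α) (a : Finset α → Finset α → ℝ) :
    ∑ S ∈ T.powerset, ∑ U ∈ S.powerset, a S U =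
      ∑ U ∈ T.powerset, ∑ S ∈ T.powerset.filter (fun S => U ⊆ S), a S U := by
  apply Finset.sum_comm'
  intro S U
  simp only [Finset.mem_powerset, Finset.mem_filter]
  constructor
  · rintro ⟨h1, h2⟩; exact ⟨⟨h1, h2⟩, h2.trans h1⟩
  · rintro ⟨⟨h1, h2⟩, _⟩; exact ⟨h1, h2⟩

lemma cum_mobius (f : Finset α → ℝ) (T : Finset α) :
    mobius (fun S => ∑ U ∈ S.powerset, f U) T = f T := by
  unfold mobius
  simp only [Finset.mul_sum]
  rw [swap_sum T (fun S U => (-1 : ℝ) ^ (T.card - S.card) * f U)]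
  have congr1 : ∀ U ∈ T.powerset,
      ∑ S ∈ T.powerset.filter (fun S => U ⊆ S), (-1 : ℝ) ^ (T.card - S.card) * f U =
        (if U = T then 1 else 0) * f U := by
    intro U hU
    rw [← Finset.sum_mul, sign1 U T (Finset.mem_powerset.mp hU)]
  rw [Finset.sum_congr rfl congr1]
  simp only [ite_mul, one_mul, zero_mul]
  rw [Finset.sum_ite_eq' T.powerset T f]
  simp

lemma mobius_cum (f : Finset α → ℝ) (T : Finset α) :
    ∑ R ∈ T.powerset, mobius f R = f T := by
  unfold mobius
  rw [swap_sum T (fun R U => (-1 : ℝ) ^ (R.card - U.card) * f U)]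
  have congr1 : ∀ U ∈ T.powerset,
      ∑ S ∈ T.powerset.filter (fun S => U ⊆ S), (-1 : ℝ) ^ (S.card - U.card) * f U =
        (if U = T then 1 else 0) * f U := by
    intro U hU
    rw [← Finset.sum_mul, sign2 U T (Finset.mem_powerset.mp hU)]
  rw [Finset.sum_congr rfl congr1]
  simp only [ite_mul, one_mul, zero_mul]
  rw [Finset.sum_ite_eq' T.powerset T f]
  simp

lemma mobiusK_singleton (i : α) (v : Finset α → ℝ) (hv : v ∅ = 0) :
    mobiusK i v {i} = v {i} := by
  unfold mobiusK
  have hps : ({i} : Finset α).powerset = {∅, {i}} := by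
    rw [← insert_empty_eq, Finset.powerset_insert, Finset.powerset_empty]
    rfl
  rw [hps]
  rw [show ({∅, {i}} : Finset (Finset α)).filter (fun T => i ∈ T ∨ T = ∅) = {∅, {i}} by
    ext T; simp; rintro (rfl | rfl) <;> simp]
  rw [Finset.sum_pair (Ne.symm (Finset.singleton_ne_empty i))]
  simp [hv]

lemma mobiusK_insert (i : α) (v : Finset α → ℝ) (hv : v ∅ = 0) (R : Finset α) (hiR : i ∉ R) :
    mobiusK i v (insert i R) = mobius (fun W => v (insert i W)) R := by
  unfold mobiusK mobius
  have hset : ((insert i R).powerset).filter (fun T => i ∈ T ∨ T = ∅) =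
      insert ∅ (R.powerset.image (insert i)) := by
    ext T
    simp only [Finset.mem_filter, Finset.mem_powerset, Finset.mem_insert, Finset.mem_image]
    constructor
    · rintro ⟨hsub, hi | rfl⟩
      · right
        refine ⟨T.erase i, ?_, Finset.insert_erase hi⟩
        intro t ht
        have ht1 := Finset.mem_erase.mp ht
        have := hsub ht1.2
        rw [Finset.mem_insert] at this
        tauto
      · left; rfl
    · rintro (rfl | ⟨W, hW, rfl⟩)
      · exact ⟨Finset.empty_subset _, Or.inr rfl⟩
      · exact ⟨Finset.insert_subset_insert i hW, Or.inl (Finset.mem_insert_self i W)⟩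
  rw [hset, Finset.sum_insert (by
    intro hmem
    rw [Finset.mem_image] at hmem
    obtain ⟨W, _, hW⟩ := hmem
    exact (Finset.insert_ne_empty i W) hW)]
  rw [Finset.sum_image (by
    intro W1 h1 W2 h2 heq
    have hi1 : i ∉ W1 := fun hc => hiR (Finset.mem_powerset.mp h1 hc)
    have hi2 : i ∉ W2 := fun hc => hiR (Finset.mem_powerset.mp h2 hc)
    have := congrArg (Finset.erase · i) heq
    simpa [Finset.erase_insert hi1, Finset.erase_insert hi2] using this)]
  rw [hv, mul_zero, zero_add]
  apply Finset.sum_congr rfl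
  intro W hW
  have hWR : W ⊆ R := Finset.mem_powerset.mp hW
  have hiW : i ∉ W := fun hc => hiR (hWR hc)
  congr 1
  have hsd : insert i R \ insert i W = R \ W := by
    ext t
    simp only [Finset.mem_sdiff, Finset.mem_insert]
    constructor
    · rintro ⟨h1 | h1, h2⟩
      · exact absurd (Or.inl h1) h2
      · exact ⟨h1, fun hc => h2 (Or.inr hc)⟩
    · rintro ⟨h1, h2⟩
      exact ⟨Or.inr h1, fun hc => by rcases hc with rfl | hc; exact hiR h1; exact h2 hc⟩
  rw [hsd]
  congr 1
  rw [Finset.card_sdiff_of_subset hWR]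

lemma mvx_nonneg (i : α) (v : Finset α → ℝ) (hv : v ∅ = 0)
    (hpos : ∀ S : Finset α, (i ∈ S ∨ S = ∅) → 0 ≤ mobiusK i v S)
    (x : Finset α → Bool) (T : Finset α) : 0 ≤ mvx i v x T := by
  unfold mvx
  split_ifs with h1 h2 h3 h4 h5
  all_goals first
    | exact le_refl 0
    | (rw [← mobiusK_singleton i v hv]
       exact hpos {i} (Or.inl (Finset.mem_singleton_self i)))
    | exact hpos (insert i T) (Or.inl (Finset.mem_insert_self i T))
    | exact hpos T (Or.inl (by tauto))

end Aux

/-- For a P-extendable `i`-centered incomplete game and any `x ∈ {0,1}^{K^c}`, the game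
`v_x` defined via its Möbius transform `mvx` is a positive extension of `(N,K,v)`. -/
theorem stmt2 {α : Type*} [Fintype α] [DecidableEq α] (i : α) (v : Finset α → ℝ)
    (hv : v ∅ = 0) (hpos : ∀ S : Finset α, (i ∈ S ∨ S = ∅) → 0 ≤ mobiusK i v S)
    (x : Finset α → Bool) :
    (fun S : Finset α => ∑ T ∈ S.powerset, mvx i v x T) ∅ = 0 ∧
    (∀ T : Finset α, 0 ≤ mobius (fun S : Finset α => ∑ T ∈ S.powerset, mvx i v x T) T) ∧
    (∀ S : Finset α, (i ∈ S ∨ S = ∅) →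
      (fun S : Finset α => ∑ T ∈ S.powerset, mvx i v x T) S = v S) := by
  refine ⟨by simp [mvx], fun T => ?_, fun S hS => ?_⟩
  · rw [cum_mobius (mvx i v x) T]
    exact mvx_nonneg i v hv hpos x T
  · simp only
    rcases hS with hiS | rfl
    · set P := S.erase i with hP
      have hiP : i ∉ P := Finset.notMem_erase i S
      have hSP : insert i P = S := Finset.insert_erase hiS
      rw [← hSP, Finset.sum_powerset_insert hiP, ← Finset.sum_add_distrib]
      have key : ∀ T ∈ P.powerset, mvx i v x T + mvx i v x (insert i T) =
          mobiusK i v (insert i T) := by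
        intro T hT
        have hiT : i ∉ T := fun hc => hiP (Finset.mem_powerset.mp hT hc)
        by_cases hTe : T = ∅
        · subst hTe
          have h1 : mvx i v x ∅ = 0 := by simp [mvx]
          have hie : insert i (∅ : Finset α) = {i} := insert_empty_eq i
          have h2 : mvx i v x (insert i ∅) = v {i} := by
            unfold mvx
            rw [hie, if_neg (by simp), if_pos rfl]
          rw [h1, h2, zero_add, hie, mobiusK_singleton i v hv]
        · have hne1 : insert i T ≠ ∅ := Finset.insert_ne_empty i T
          have hne2 : insert i T ≠ {i} := by
            intro hc
            apply hTe
            ext t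
            simp only [Finset.notMem_empty, iff_false]
            intro ht
            have : t ∈ insert i T := Finset.mem_insert_of_mem ht
            rw [hc, Finset.mem_singleton] at this
            exact hiT (this ▸ ht)
          have h2 : mvx i v x (insert i T) =
              if x T = true then mobiusK i v (insert i T) else 0 := by
            unfold mvx
            rw [if_neg hne1, if_neg hne2, if_neg (by simp : ¬ (i ∉ insert i T)),
              Finset.erase_insert hiT]
          have h1 : mvx i v x T =
              if x T = false then mobiusK i v (insert i T) else 0 := by
            unfold mvx
            rw [if_neg hTe, if_neg (by
              intro hc
              rw [hc] at hiT
              exact hiT (Finset.mem_singleton_self i)), if_pos hiT]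
          rw [h1, h2]
          cases hx : x T <;> simp
      rw [Finset.sum_congr rfl key]
      have key2 : ∀ T ∈ P.powerset, mobiusK i v (insert i T) =
          mobius (fun W => v (insert i W)) T := by
        intro T hT
        exact mobiusK_insert i v hv T (fun hc => hiP (Finset.mem_powerset.mp hT hc))
      rw [Finset.sum_congr rfl key2, mobius_cum (fun W => v (insert i W)) P, hSP]
    · simp [mvx, hv]
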